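/- arXiv:1308.2888 — 2 statements merged into one kernel-verified Lean document; each statement's English description precedes it below -/
import Mathlib

section
/- In the Klein bottle group G = ⟨a, b | a b a⁻¹ = b⁻¹⟩, two elements a^{n₁} b^{m₁} and a^{n₂} b^{m₂} are conjugate in G if and only if either (n₁ = n₂ and m₁ = ±m₂), or (n₁ = n₂ is odd and m₁ ≡ m₂ mod 2). -/
/-- Relators of the Klein bottle group ⟨a, b | a b a⁻¹ = b⁻¹⟩. -/
abbrev kleinRels : Set (FreeGroup (Fin 2)) :=
  {FreeGroup.of 0 * FreeGroup.of 1 * (FreeGroup.of 0)⁻¹ * FreeGroup.of 1}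

/-- The Klein bottle group. -/
abbrev KleinGroup := PresentedGroup kleinRels

noncomputable def ka : KleinGroup := PresentedGroup.of 0
noncomputable def kb : KleinGroup := PresentedGroup.of 1

/-! ### Auxiliary sign function -/

def sg (n : ℤ) : ℤ := (Int.negOnePow n : ℤ)

lemma sg_add (a b : ℤ) : sg (a + b) = sg a * sg b := by
  simp [sg, Int.negOnePow_add]

lemma sg_neg (a : ℤ) : sg (-a) = sg a := by simp [sg, Int.negOnePow_neg]

lemma sg_zero : sg 0 = 1 := rfl

lemma sg_one : sg 1 = -1 := rfl

lemma sg_mul_self (a : ℤ) : sg a * sg a = 1 := by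
  have := Int.units_mul_self (Int.negOnePow a)
  simpa [sg, ← Units.val_mul] using congrArg (Units.val) this

lemma sg_cases (a : ℤ) : sg a = 1 ∨ sg a = -1 := by
  rcases Int.units_eq_one_or (Int.negOnePow a) with h | h <;>
    simp [sg, h]

lemma sg_even {a : ℤ} (h : Even a) : sg a = 1 := by
  simp [sg, Int.negOnePow_even a h]

lemma sg_odd {a : ℤ} (h : Odd a) : sg a = -1 := by
  simp [sg, Int.negOnePow_odd a h]

/-! ### A concrete model of the Klein bottle group -/

@[ext] structure KM where
  n : ℤ
  m : ℤ

namespace KM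

instance : Mul KM := ⟨fun x y => ⟨x.n + y.n, sg y.n * x.m + y.m⟩⟩
instance : One KM := ⟨⟨0, 0⟩⟩
instance : Inv KM := ⟨fun x => ⟨-x.n, -(sg x.n * x.m)⟩⟩

lemma mul_def (x y : KM) : x * y = ⟨x.n + y.n, sg y.n * x.m + y.m⟩ := rfl
lemma one_def : (1 : KM) = ⟨0, 0⟩ := rfl
lemma inv_def (x : KM) : x⁻¹ = ⟨-x.n, -(sg x.n * x.m)⟩ := rfl

instance : Group KM where
  mul_assoc x y z := by
    ext
    · show x.n + y.n + z.n = x.n + (y.n + z.n); ring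
    · show sg z.n * (sg y.n * x.m + y.m) + z.m
        = sg (y.n + z.n) * x.m + (sg z.n * y.m + z.m)
      rw [sg_add]; ring
  one_mul x := by
    ext
    · show 0 + x.n = x.n; ring
    · show sg x.n * 0 + x.m = x.m; ring
  mul_one x := by
    ext
    · show x.n + 0 = x.n; ring
    · show sg 0 * x.m + 0 = x.m; rw [sg_zero]; ring
  inv_mul_cancel x := by
    ext
    · show -x.n + x.n = 0; ring
    · show sg x.n * -(sg x.n * x.m) + x.m = 0
      linear_combination (-x.m) * sg_mul_self x.n

def A : KM := ⟨1, 0⟩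
def B : KM := ⟨0, 1⟩

lemma zpow_A (n : ℤ) : A ^ n = ⟨n, 0⟩ := by
  induction n using Int.induction_on with
  | zero => rfl
  | succ k ih =>
      rw [zpow_add_one, ih]
      ext
      · show (k : ℤ) + 1 = (k : ℤ) + 1; ring
      · show sg 1 * 0 + 0 = 0; ring
  | pred k ih =>
      rw [zpow_sub_one, ih]
      ext
      · show -(k : ℤ) + -1 = -(k : ℤ) - 1; ring
      · show sg (-1) * 0 + -(sg 1 * 0) = 0; ring

lemma zpow_B (m : ℤ) : B ^ m = ⟨0, m⟩ := by
  induction m using Int.induction_on with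
  | zero => rfl
  | succ k ih =>
      rw [zpow_add_one, ih]
      ext
      · show (0 : ℤ) + 0 = 0; ring
      · show sg 0 * (k : ℤ) + 1 = (k : ℤ) + 1; rw [sg_zero]; ring
  | pred k ih =>
      rw [zpow_sub_one, ih]
      ext
      · show (0 : ℤ) + -0 = 0; ring
      · show sg (-0) * (-(k : ℤ)) + -(sg 0 * 1) = -(k : ℤ) - 1
        rw [neg_zero, sg_zero]; ring

end KM

/-! ### The homomorphism from the Klein group to the model -/

lemma klein_rels_map :
    ∀ r ∈ kleinRels, FreeGroup.lift (![KM.A, KM.B] : Fin 2 → KM) r = 1 := by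
  intro r hr
  rw [Set.mem_singleton_iff] at hr
  subst hr
  simp only [map_mul, map_inv, FreeGroup.lift_apply_of, Matrix.cons_val_zero, Matrix.cons_val_one,
    Matrix.head_cons]
  rw [KM.A, KM.B, KM.mul_def, KM.inv_def, KM.mul_def, KM.mul_def, KM.one_def]
  ext <;> simp <;> norm_num [sg_zero, sg_one, sg_neg, sg_add]

noncomputable def kf : KleinGroup →* KM := PresentedGroup.toGroup klein_rels_map

lemma kf_apply (n m : ℤ) : kf (ka ^ n * kb ^ m) = ⟨n, m⟩ := by
  have ha : kf ka = KM.A := PresentedGroup.toGroup.of klein_rels_map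
  have hb : kf kb = KM.B := by
    have := PresentedGroup.toGroup.of klein_rels_map (x := (1 : Fin 2))
    simpa [kb, kf] using this
  rw [map_mul, map_zpow, map_zpow, ha, hb, KM.zpow_A, KM.zpow_B, KM.mul_def]
  ext <;> simp [sg_zero]

/-! ### Relations in the Klein group -/

lemma klein_rel : ka * kb * ka⁻¹ = kb⁻¹ := by
  have h : (PresentedGroup.mk kleinRels)
      (FreeGroup.of 0 * FreeGroup.of 1 * (FreeGroup.of 0)⁻¹ * FreeGroup.of 1) = 1 := by
    apply (QuotientGroup.eq_one_iff _).mpr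
    exact Subgroup.subset_normalClosure (Set.mem_singleton _)
  simp only [map_mul, map_inv] at h
  exact mul_eq_one_iff_eq_inv.mp h

lemma conj_b_zpow (m : ℤ) : ka * kb ^ m * ka⁻¹ = kb ^ (-m) := by
  rw [← conj_zpow, klein_rel, inv_zpow, zpow_neg]

lemma comm_b_a (k : ℤ) : kb ^ k * ka = ka * kb ^ (-k) := by
  have := conj_b_zpow (-k)
  rw [neg_neg] at this
  rw [← this]
  group

lemma comm_b_a_sq (k : ℤ) : Commute (kb ^ k) (ka ^ (2 : ℤ)) := by
  show kb ^ k * ka ^ (2 : ℤ) = ka ^ (2 : ℤ) * kb ^ k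
  rw [zpow_two, ← mul_assoc, comm_b_a, mul_assoc, comm_b_a, neg_neg, mul_assoc]

lemma odd_comm {n : ℤ} (k : ℤ) (h : Odd n) : kb ^ k * ka ^ n = ka ^ n * kb ^ (-k) := by
  obtain ⟨j, hj⟩ := h
  have hn : ka ^ n = (ka ^ (2 : ℤ)) ^ j * ka := by
    rw [← zpow_mul, ← zpow_add_one, hj]
  have hc : kb ^ k * (ka ^ (2 : ℤ)) ^ j = (ka ^ (2 : ℤ)) ^ j * kb ^ k :=
    (comm_b_a_sq k).zpow_right j
  rw [hn, ← mul_assoc, hc, mul_assoc, comm_b_a, mul_assoc]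

/-- a^{n₁} b^{m₁} and a^{n₂} b^{m₂} are conjugate in the Klein bottle group iff
either n₁ = n₂ and m₁ = ±m₂, or n₁ = n₂ is odd and m₁ ≡ m₂ (mod 2). -/
theorem stmt_3 (n₁ m₁ n₂ m₂ : ℤ) :
    IsConj (ka ^ n₁ * kb ^ m₁) (ka ^ n₂ * kb ^ m₂) ↔
      ((n₁ = n₂ ∧ (m₁ = m₂ ∨ m₁ = -m₂)) ∨
        (n₁ = n₂ ∧ Odd n₁ ∧ m₁ % 2 = m₂ % 2)) := by
  constructor
  · intro h
    obtain ⟨c, hc⟩ := isConj_iff.mp (kf.map_isConj h)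
    rw [kf_apply, kf_apply] at hc
    set q := c.n with hq
    set p := c.m with hp
    have hmul : c * (⟨n₁, m₁⟩ : KM) * c⁻¹ =
        ⟨q + n₁ + -q, sg (-q) * (sg n₁ * p + m₁) + -(sg q * p)⟩ := by
      rw [KM.mul_def, KM.inv_def, KM.mul_def]
    rw [hmul, sg_neg] at hc
    have hn : q + n₁ + -q = n₂ := congrArg KM.n hc
    have hm : sg q * (sg n₁ * p + m₁) + -(sg q * p) = m₂ := congrArg KM.m hc
    have hn12 : n₁ = n₂ := by omega
    rcases Int.even_or_odd n₁ with he | ho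
    · left
      refine ⟨hn12, ?_⟩
      rw [sg_even he] at hm
      rcases sg_cases q with h1 | h1 <;> rw [h1] at hm <;> omega
    · right
      refine ⟨hn12, ho, ?_⟩
      rw [sg_odd ho] at hm
      rcases sg_cases q with h1 | h1 <;> rw [h1] at hm <;> omega
  · rintro (⟨rfl, (rfl | rfl)⟩ | ⟨rfl, hodd, hmod⟩)
    · exact IsConj.refl _
    · apply isConj_iff.mpr ⟨ka, ?_⟩
      have h1 : ka * (ka ^ n₁ * kb ^ (-m₂)) * ka⁻¹ = ka ^ n₁ * (ka * kb ^ (-m₂) * ka⁻¹) := by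
        group
      rw [h1, conj_b_zpow, neg_neg]
    · apply isConj_iff.mpr ⟨kb ^ ((m₁ - m₂) / 2), ?_⟩
      set k : ℤ := (m₁ - m₂) / 2 with hk
      have h2 : (2 : ℤ) ∣ m₁ - m₂ := by omega
      have hkk : -k + (m₁ + -k) = m₂ := by omega
      have h1 : kb ^ k * (ka ^ n₁ * kb ^ m₁) * (kb ^ k)⁻¹ =
          (kb ^ k * ka ^ n₁) * kb ^ (m₁ + -k) := by
        group
      rw [h1, odd_comm k hodd, mul_assoc, ← zpow_add, hkk]
end

section
/- Let G be a group with an exact sequence 1 → ⟨h⟩ → G → Q → 1 where h is central of infinite order. If u, v ∈ G have conjugate images in Q, say ū = ā v̄ ā⁻¹, then for any lift a of ā there is a unique integer p with u = a v a⁻¹ hᵖ; and u is conjugate to v in G if and only if p lies in the subgroup of ℤ generated by the integers n(x) defined by [v, x] = h^{n(x)} for x ranging over lifts of generators of the centralizer of v̄ in Q. -/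
/-- Let h ∈ G be central of infinite order, N = ⟨h⟩, Q = G/N, ρ the quotient map.
If ū = ā v̄ ā⁻¹ in Q, then for any lift a there is a unique p ∈ ℤ with
u = a v a⁻¹ hᵖ; and for such p, u ~ v in G iff p lies in the subgroup of ℤ
generated by the integers n(g) with [v, g] = h^{n(g)}, g ranging over lifts of
elements of the centralizer of v̄ in Q. -/
theorem stmt_19 {G : Type*} [Group G] (h : G)
    (hc : h ∈ Subgroup.center G)
    (hinf : ∀ n : ℤ, h ^ n = 1 → n = 0)
    [hN : (Subgroup.zpowers h).Normal]
    (u v a : G)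
    (hconj : QuotientGroup.mk' (Subgroup.zpowers h) u =
      QuotientGroup.mk' (Subgroup.zpowers h) a *
        QuotientGroup.mk' (Subgroup.zpowers h) v *
        (QuotientGroup.mk' (Subgroup.zpowers h) a)⁻¹) :
    (∃! p : ℤ, u = a * v * a⁻¹ * h ^ p) ∧
      ∀ p : ℤ, u = a * v * a⁻¹ * h ^ p →
        (IsConj u v ↔
          p ∈ AddSubgroup.closure {n : ℤ | ∃ g : G,
            QuotientGroup.mk' (Subgroup.zpowers h) g ∈
              Subgroup.centralizer {QuotientGroup.mk' (Subgroup.zpowers h) v} ∧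
            v * g * v⁻¹ * g⁻¹ = h ^ n}) := by
  have hcomm' : ∀ (x : G) (n : ℤ), h ^ n * x = x * h ^ n := fun x n =>
    (Subgroup.mem_center_iff.mp (Subgroup.zpow_mem _ hc n) x).symm
  -- existence of p
  have hmk : QuotientGroup.mk' (Subgroup.zpowers h) (a * v * a⁻¹) =
      QuotientGroup.mk' (Subgroup.zpowers h) u := by
    simp only [map_mul, map_inv, hconj]
  obtain ⟨z, hz, hzeq⟩ := (QuotientGroup.mk'_eq_mk' _).mp hmk
  obtain ⟨p₀, hp₀⟩ := Subgroup.mem_zpowers_iff.mp hz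
  have hex : u = a * v * a⁻¹ * h ^ p₀ := by rw [hp₀, hzeq]
  -- the commutator relation reformulated
  have key : ∀ (g : G) (n : ℤ), v * g * v⁻¹ * g⁻¹ = h ^ n ↔ v * g = g * v * h ^ n := by
    intro g n
    rw [← hcomm' (g * v) n]
    constructor
    · intro hn; rw [← hn]; group
    · intro hn; rw [hn]; group
  have hone : ∀ n : ℤ, QuotientGroup.mk' (Subgroup.zpowers h) (h ^ n) = 1 := fun n =>
    (QuotientGroup.eq_one_iff _).mpr (Subgroup.zpow_mem _ (Subgroup.mem_zpowers h) n)
  refine ⟨⟨p₀, hex, ?_⟩, ?_⟩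
  · intro q hq
    have h1 : h ^ q = h ^ p₀ := mul_left_cancel (hq.symm.trans hex)
    have h2 : h ^ (q - p₀) = 1 := by
      rw [sub_eq_add_neg, zpow_add, h1, zpow_neg, mul_inv_cancel]
    have := hinf _ h2
    omega
  · intro p hp
    constructor
    · -- IsConj → p ∈ closure
      intro hcj
      obtain ⟨c, hc'⟩ := isConj_iff.mp hcj
      have hu : u = c⁻¹ * v * c := by rw [← hc']; group
      have heq : c⁻¹ * v * c = a * v * a⁻¹ * h ^ p := hu ▸ hp
      have hvca : v * (c * a) = c * a * v * h ^ p := by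
        have h1 : v * (c * a) = c * (c⁻¹ * v * c) * a := by group
        rw [h1, heq]
        simp only [mul_assoc, hcomm']
        group
      apply AddSubgroup.subset_closure
      refine ⟨c * a, ?_, (key (c * a) p).mpr hvca⟩
      rw [Subgroup.mem_centralizer_iff]
      intro y hy
      rw [Set.mem_singleton_iff] at hy
      subst hy
      rw [← map_mul, ← map_mul, hvca, map_mul, hone, mul_one]
    · -- p ∈ closure → IsConj
      intro hmem
      have hreal : ∀ n ∈ AddSubgroup.closure {n : ℤ | ∃ g : G,
          QuotientGroup.mk' (Subgroup.zpowers h) g ∈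
            Subgroup.centralizer {QuotientGroup.mk' (Subgroup.zpowers h) v} ∧
          v * g * v⁻¹ * g⁻¹ = h ^ n}, ∃ g : G, v * g = g * v * h ^ n := by
        intro n hn
        induction hn using AddSubgroup.closure_induction with
        | mem x hx =>
          obtain ⟨g, _, hg⟩ := hx
          exact ⟨g, (key g x).mp hg⟩
        | zero => exact ⟨1, by simp⟩
        | add x y hx hy ihx ihy =>
          obtain ⟨g₁, hg₁⟩ := ihx
          obtain ⟨g₂, hg₂⟩ := ihy
          refine ⟨g₁ * g₂, ?_⟩
          calc v * (g₁ * g₂) = (v * g₁) * g₂ := by group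
            _ = g₁ * v * h ^ x * g₂ := by rw [hg₁]
            _ = g₁ * (v * g₂) * h ^ x := by simp only [mul_assoc, hcomm']
            _ = g₁ * (g₂ * v * h ^ y) * h ^ x := by rw [hg₂]
            _ = g₁ * g₂ * v * h ^ (x + y) := by group
        | neg x hx ihx =>
          obtain ⟨g, hg⟩ := ihx
          refine ⟨g⁻¹, ?_⟩
          have h2 : g⁻¹ * v = v * h ^ x * g⁻¹ := by
            calc g⁻¹ * v = g⁻¹ * (v * g) * g⁻¹ := by group
              _ = g⁻¹ * (g * v * h ^ x) * g⁻¹ := by rw [hg]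
              _ = v * h ^ x * g⁻¹ := by group
          calc v * g⁻¹ = v * h ^ x * g⁻¹ * h ^ (-x) := by
                rw [mul_assoc v (h ^ x) g⁻¹, hcomm' g⁻¹ x]; group
            _ = g⁻¹ * v * h ^ (-x) := by rw [← h2]
      obtain ⟨g, hg⟩ := hreal p hmem
      rw [isConj_iff]
      refine ⟨g * a⁻¹, ?_⟩
      calc g * a⁻¹ * u * (g * a⁻¹)⁻¹
          = g * a⁻¹ * (a * v * a⁻¹ * h ^ p) * (a * g⁻¹) := by rw [hp]; group
        _ = g * v * h ^ p * g⁻¹ := by simp only [mul_assoc, hcomm']; group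
        _ = v * g * g⁻¹ := by rw [← hg]
        _ = v := by group
end
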